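/- Define ψ_a(u) = ⟨a, u⟩²/‖u‖² for a unit vector a and nonzero u. Then ∇ψ_a(u) = (2⟨a,u⟩/‖u‖⁴)(a‖u‖² − u⟨a,u⟩), and consequently ‖∇ψ_a(u)‖ ≥ (2/‖u‖) cos β (1 − cos β), where β ∈ [0, π/2] is the angle with cos β = |⟨a,u⟩|/‖u‖. -/

import Mathlib

open scoped RealInnerProductSpace

theorem stmt8 {d : ℕ} (a : EuclideanSpace ℝ (Fin d)) (ha : ‖a‖ = 1)
    (u : EuclideanSpace ℝ (Fin d)) (hu : u ≠ 0) :
    gradient (fun v : EuclideanSpace ℝ (Fin d) => ⟪a, v⟫ ^ 2 / ‖v‖ ^ 2) u =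
        (2 * ⟪a, u⟫ / ‖u‖ ^ 4) • (‖u‖ ^ 2 • a - ⟪a, u⟫ • u) ∧
      (2 / ‖u‖) * (|⟪a, u⟫| / ‖u‖) * (1 - |⟪a, u⟫| / ‖u‖) ≤
        ‖gradient (fun v : EuclideanSpace ℝ (Fin d) => ⟪a, v⟫ ^ 2 / ‖v‖ ^ 2) u‖ := by
  have hr : (0:ℝ) < ‖u‖ := norm_pos_iff.mpr hu
  have hr2 : (‖u‖:ℝ)^2 ≠ 0 := by positivity
  set c : ℝ := ⟪a, u⟫ with hc
  set g : EuclideanSpace ℝ (Fin d) := (2 * c / ‖u‖ ^ 4) • (‖u‖ ^ 2 • a - c • u) with hg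
  have h1 : HasFDerivAt (fun v : EuclideanSpace ℝ (Fin d) => ⟪a, v⟫) (innerSL ℝ a) u :=
    (innerSL ℝ a).hasFDerivAt
  have h2 : HasFDerivAt (fun v : EuclideanSpace ℝ (Fin d) => ⟪a, v⟫ ^ 2)
      (c • innerSL ℝ a + c • innerSL ℝ a) u := by
    simp only [sq]
    exact h1.mul h1
  have h3 : HasFDerivAt (fun v : EuclideanSpace ℝ (Fin d) => ‖v‖ ^ 2) (2 • innerSL ℝ u) u := by
    simpa using (hasFDerivAt_id u).norm_sq
  have h4 : HasFDerivAt (fun v : EuclideanSpace ℝ (Fin d) => (‖v‖ ^ 2)⁻¹)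
      ((ContinuousLinearMap.smulRight (1 : ℝ →L[ℝ] ℝ) (-((‖u‖^2) ^ 2)⁻¹)).comp
        (2 • innerSL ℝ u)) u :=
    (hasFDerivAt_inv hr2).comp u h3
  have h5 := h2.mul h4
  have h6 : HasGradientAt (fun v : EuclideanSpace ℝ (Fin d) => ⟪a, v⟫ ^ 2 / ‖v‖ ^ 2) g u := by
    rw [hasGradientAt_iff_hasFDerivAt]
    have heq : (fun v : EuclideanSpace ℝ (Fin d) => ⟪a, v⟫ ^ 2 / ‖v‖ ^ 2)
        = fun v : EuclideanSpace ℝ (Fin d) => ⟪a, v⟫ ^ 2 * (‖v‖ ^ 2)⁻¹ := by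
      funext v; rw [div_eq_mul_inv]
    rw [heq]
    convert h5 using 1
    · rfl
    · rfl
    ext v
    simp only [InnerProductSpace.toDual_apply_apply, ContinuousLinearMap.add_apply,
      ContinuousLinearMap.smul_apply, ContinuousLinearMap.comp_apply,
      ContinuousLinearMap.smulRight_apply, ContinuousLinearMap.one_apply,
      innerSL_apply_apply, hg, inner_smul_left, inner_sub_left, smul_eq_mul, ← hc, conj_trivial]
    have h4' : (‖u‖:ℝ)^4 = (‖u‖^2)^2 := by ring
    field_simp
    ring
  have hgrad := h6.gradient
  refine ⟨hgrad, ?_⟩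
  rw [hgrad]
  have hCS : |c| ≤ ‖u‖ := by
    calc |c| ≤ ‖a‖ * ‖u‖ := abs_real_inner_le_norm a u
    _ = ‖u‖ := by rw [ha, one_mul]
  have hw2 : ‖(‖u‖ ^ 2 • a - c • u : EuclideanSpace ℝ (Fin d))‖ ^ 2
      = ‖u‖^2 * (‖u‖^2 - c^2) := by
    have ha2 : ‖a‖^2 = 1 := by rw [ha]; norm_num
    rw [← real_inner_self_eq_norm_sq]
    simp only [inner_sub_left, inner_sub_right, inner_smul_left, inner_smul_right,
      real_inner_self_eq_norm_sq, conj_trivial]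
    have hcomm : (⟪u, a⟫ : ℝ) = c := by rw [hc]; exact real_inner_comm a u
    linear_combination (‖u‖^2*‖u‖^2) * ha2 - (‖u‖^2*c) * hcomm
  have hgnorm : ‖g‖ = (2 * |c| / ‖u‖ ^ 4) * ‖(‖u‖ ^ 2 • a - c • u : EuclideanSpace ℝ (Fin d))‖ := by
    rw [hg, norm_smul]
    congr 1
    rw [Real.norm_eq_abs, abs_div, abs_of_pos (by positivity : (0:ℝ) < ‖u‖^4), abs_mul]
    norm_num
  set m : ℝ := |c| with hm
  have hm0 : 0 ≤ m := abs_nonneg c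
  have hm2 : m^2 = c^2 := sq_abs c
  have hLnn : 0 ≤ (2 / ‖u‖) * (m / ‖u‖) * (1 - m / ‖u‖) := by
    have h1' : m / ‖u‖ ≤ 1 := by rw [div_le_one hr]; exact hCS
    have h0 : 0 ≤ m / ‖u‖ := by positivity
    exact mul_nonneg (mul_nonneg (by positivity) h0) (by linarith)
  have hg2 : ‖g‖^2 = 4 * m^2 * (‖u‖^2 - m^2) / ‖u‖^6 := by
    rw [hgnorm, mul_pow, hw2, ← hm2]
    field_simp
    ring
  have hsq : ((2 / ‖u‖) * (m / ‖u‖) * (1 - m / ‖u‖))^2 ≤ ‖g‖^2 := by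
    have e1 : ((2 / ‖u‖) * (m / ‖u‖) * (1 - m / ‖u‖))^2
        = 4 * m^2 * (‖u‖ - m)^2 / ‖u‖^6 := by field_simp; ring
    rw [e1, hg2]
    apply div_le_div_of_nonneg_right ?_ (by positivity)
    nlinarith [mul_nonneg (mul_nonneg (mul_nonneg hm0 hm0) hm0) (sub_nonneg.mpr hCS)]
  calc (2 / ‖u‖) * (m / ‖u‖) * (1 - m / ‖u‖)
      = Real.sqrt (((2 / ‖u‖) * (m / ‖u‖) * (1 - m / ‖u‖))^2) := (Real.sqrt_sq hLnn).symm
    _ ≤ Real.sqrt (‖g‖^2) := Real.sqrt_le_sqrt hsq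
    _ = ‖g‖ := Real.sqrt_sq (norm_nonneg g)
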